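/- For Boolean subalgebras A and B of a Boolean algebra C, if there exist nonzero a ∈ A and b ∈ B with a ⊓ b = 0, then A and B are not subalgebra-independent: there exist Boolean homomorphisms α : A → A and β : B → B with no joint extension to the subalgebra generated by A ∪ B. -/

import Mathlib

structure BoolSubalg (C : Type*) [BooleanAlgebra C] where
  carrier : Set C
  sup_mem : ∀ {a b : C}, a ∈ carrier → b ∈ carrier → a ⊔ b ∈ carrier
  inf_mem : ∀ {a b : C}, a ∈ carrier → b ∈ carrier → a ⊓ b ∈ carrier
  compl_mem : ∀ {a : C}, a ∈ carrier → aᶜ ∈ carrier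
  bot_mem : ⊥ ∈ carrier
  top_mem : ⊤ ∈ carrier

variable {C : Type*} [BooleanAlgebra C]

def IsBoolHom (S T : BoolSubalg C) (f : S.carrier → C) : Prop :=
  (∀ x, f x ∈ T.carrier) ∧
  (∀ x y : S.carrier, f ⟨↑x ⊔ ↑y, S.sup_mem x.2 y.2⟩ = f x ⊔ f y) ∧
  (∀ x y : S.carrier, f ⟨↑x ⊓ ↑y, S.inf_mem x.2 y.2⟩ = f x ⊓ f y) ∧
  (∀ x : S.carrier, f ⟨(↑x)ᶜ, S.compl_mem x.2⟩ = (f x)ᶜ) ∧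
  f ⟨⊥, S.bot_mem⟩ = ⊥ ∧ f ⟨⊤, S.top_mem⟩ = ⊤

def genBoolSubalg (s : Set C) : BoolSubalg C where
  carrier := {x | ∀ T : BoolSubalg C, s ⊆ T.carrier → x ∈ T.carrier}
  sup_mem := fun ha hb T hT => T.sup_mem (ha T hT) (hb T hT)
  inf_mem := fun ha hb T hT => T.inf_mem (ha T hT) (hb T hT)
  compl_mem := fun ha T hT => T.compl_mem (ha T hT)
  bot_mem := fun T _ => T.bot_mem
  top_mem := fun T _ => T.top_mem

theorem subset_genBoolSubalg (s : Set C) : s ⊆ (genBoolSubalg s).carrier :=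
  fun _ hx _ hT => hT hx

open Classical in
/-- The two-valued map attached to a prime ideal is a Boolean homomorphism on any subalgebra. -/
theorem isBoolHom_of_primeIdeal (S : BoolSubalg C) (J : Order.Ideal C)
    (hJ : Order.Ideal.IsPrime J) :
    IsBoolHom S S (fun x => if (x : C) ∈ J then (⊥ : C) else ⊤) := by
  have hnot : ∀ x : C, xᶜ ∈ J ↔ x ∉ J := by
    intro x
    constructor
    · intro hc hx
      exact hJ.toIsProper.top_notMem (by
        have : x ⊔ xᶜ ∈ J := J.sup_mem hx hc
        rwa [sup_compl_eq_top] at this)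
    · intro hx
      exact hJ.compl_mem_of_notMem hx
  refine ⟨?_, ?_, ?_, ?_, ?_, ?_⟩
  · intro x
    by_cases h : (x : C) ∈ J <;> simp [h, S.bot_mem, S.top_mem]
  · intro x y
    by_cases hx : (x : C) ∈ J <;> by_cases hy : (y : C) ∈ J
    · have hm : (↑x ⊔ ↑y : C) ∈ J := J.sup_mem hx hy
      simp [hx, hy, hm]
    · have : (x : C) ⊔ y ∉ J := fun h => hy (J.lower le_sup_right h)
      simp [hx, hy, this]
    · have : (x : C) ⊔ y ∉ J := fun h => hx (J.lower le_sup_left h)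
      simp [hx, hy, this]
    · have : (x : C) ⊔ y ∉ J := fun h => hx (J.lower le_sup_left h)
      simp [hx, hy, this]
  · intro x y
    by_cases hx : (x : C) ∈ J <;> by_cases hy : (y : C) ∈ J
    · have hm : (↑x ⊓ ↑y : C) ∈ J := J.lower inf_le_left hx
      simp [hx, hy, hm]
    · have hm : (↑x ⊓ ↑y : C) ∈ J := J.lower inf_le_left hx
      simp [hx, hy, hm]
    · have hm : (↑x ⊓ ↑y : C) ∈ J := J.lower inf_le_right hy
      simp [hx, hy, hm]
    · have : (x : C) ⊓ y ∉ J := fun h => (hJ.mem_or_mem h).elim hx hy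
      simp [hx, hy, this]
  · intro x
    by_cases hx : (x : C) ∈ J
    · have : (x : C)ᶜ ∉ J := fun h => ((hnot x).1 h) hx
      simp [hx, this]
    · simp [hx, (hnot x).2 hx]
  · simp [J.bot_mem]
  · simp [hJ.toIsProper.top_notMem]

open Classical in
theorem boolean_not_independent_of_meet_eq_bot (A B : BoolSubalg C)
    (a b : C) (ha : a ∈ A.carrier) (hb : b ∈ B.carrier)
    (ha0 : a ≠ ⊥) (hb0 : b ≠ ⊥) (hab : a ⊓ b = ⊥) :
    ∃ (α : A.carrier → C) (β : B.carrier → C),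
      IsBoolHom A A α ∧ IsBoolHom B B β ∧
      ¬ ∃ γ : (genBoolSubalg (A.carrier ∪ B.carrier)).carrier → C,
          IsBoolHom (genBoolSubalg (A.carrier ∪ B.carrier))
            (genBoolSubalg (A.carrier ∪ B.carrier)) γ ∧
          (∀ (x : C) (hx : x ∈ A.carrier),
            γ ⟨x, subset_genBoolSubalg _ (Or.inl hx)⟩ = α ⟨x, hx⟩) ∧
          (∀ (x : C) (hx : x ∈ B.carrier),
            γ ⟨x, subset_genBoolSubalg _ (Or.inr hx)⟩ = β ⟨x, hx⟩) := by
  -- prime ideal avoiding a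
  have getJ : ∀ c : C, c ≠ ⊥ → ∃ J : Order.Ideal C, J.IsPrime ∧ c ∉ J := by
    intro c hc
    have hdisj : Disjoint ((Order.PFilter.principal c : Order.PFilter C) : Set C)
        ((Order.Ideal.principal ⊥ : Order.Ideal C) : Set C) := by
      rw [Set.disjoint_right]
      intro x hxI hxF
      have hx : x = ⊥ := le_bot_iff.mp (Order.Ideal.mem_principal.mp hxI)
      have : c ≤ x := by simpa using hxF
      exact hc (le_bot_iff.mp (hx ▸ this))
    obtain ⟨J, hJp, _, hJd⟩ := DistribLattice.prime_ideal_of_disjoint_filter_ideal hdisj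
    refine ⟨J, hJp, fun hcJ => ?_⟩
    exact Set.disjoint_left.mp hJd (by simp [Order.PFilter.principal]) hcJ
  obtain ⟨J, hJ, haJ⟩ := getJ a ha0
  obtain ⟨K, hK, hbK⟩ := getJ b hb0
  refine ⟨fun x => if (x : C) ∈ J then ⊥ else ⊤,
          fun x => if (x : C) ∈ K then ⊥ else ⊤,
          isBoolHom_of_primeIdeal A J hJ, isBoolHom_of_primeIdeal B K hK, ?_⟩
  rintro ⟨γ, ⟨_, _, hinf, _, hbot, _⟩, hA, hB⟩
  have hamem : a ∈ (genBoolSubalg (A.carrier ∪ B.carrier)).carrier := subset_genBoolSubalg _ (Or.inl ha)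
  have hbmem : b ∈ (genBoolSubalg (A.carrier ∪ B.carrier)).carrier := subset_genBoolSubalg _ (Or.inr hb)
  have h1 : γ ⟨a ⊓ b, (genBoolSubalg (A.carrier ∪ B.carrier)).inf_mem hamem hbmem⟩ = γ ⟨a, hamem⟩ ⊓ γ ⟨b, hbmem⟩ :=
    hinf ⟨a, hamem⟩ ⟨b, hbmem⟩
  have h2 : (⟨a ⊓ b, (genBoolSubalg (A.carrier ∪ B.carrier)).inf_mem hamem hbmem⟩ : (genBoolSubalg (A.carrier ∪ B.carrier)).carrier) = ⟨⊥, (genBoolSubalg (A.carrier ∪ B.carrier)).bot_mem⟩ :=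
    Subtype.ext hab
  have h3 : γ ⟨a, hamem⟩ = ⊤ := by
    rw [hA a ha]; simp [haJ]
  have h4 : γ ⟨b, hbmem⟩ = ⊤ := by
    rw [hB b hb]; simp [hbK]
  rw [h2, hbot, h3, h4, inf_top_eq] at h1
  exact ha0 (le_bot_iff.mp (h1 ▸ le_top : a ≤ ⊥))
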